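/- Bass's Stable Range Theorem for zero-dimensional rings: if $R$ is a commutative Artinian (equivalently, Noetherian of Krull dimension $0$) ring and $aR + bR = R$, then there exists $f \in R$ such that $(a + bf)R = R$. -/

import Mathlib

/-- Bass's Stable Range Theorem for zero-dimensional rings: if `R` is a commutative
Artinian ring and `aR + bR = R`, then there exists `f` with `(a + b * f) R = R`. -/
theorem stable_range_artinian (R : Type*) [CommRing R] [IsArtinianRing R]
    (a b : R) (h : Ideal.span ({a, b} : Set R) = ⊤) :
    ∃ f : R, Ideal.span ({a + b * f} : Set R) = ⊤ := by
  classical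
  haveI fin : Finite {I : Ideal R | I.IsMaximal} :=
    (IsArtinianRing.setOfPred_isMaximal_finite R).to_subtype
  have hcop : Pairwise fun i j : {I : Ideal R | I.IsMaximal} => IsCoprime i.1 j.1 := by
    intro i j hij
    exact Ideal.isCoprime_iff_sup_eq.mpr (Ideal.IsMaximal.coprime_of_ne i.2 j.2 (fun e => hij (Subtype.ext e)))
  obtain ⟨f, hf⟩ := Ideal.pi_quotient_surjective hcop
    (fun m => letI : m.1.IsMaximal := m.2; letI := Ideal.Quotient.field m.1;
      (Ideal.Quotient.mk m.1 b)⁻¹ * (1 - Ideal.Quotient.mk m.1 a))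
  refine ⟨f, ?_⟩
  by_contra hne
  obtain ⟨M, hM, hle⟩ := Ideal.exists_le_maximal _ hne
  haveI := hM
  letI := Ideal.Quotient.field M
  have hmem : a + b * f ∈ M := hle (Ideal.subset_span rfl)
  have h0 : Ideal.Quotient.mk M (a + b * f) = 0 :=
    (Ideal.Quotient.eq_zero_iff_mem).2 hmem
  have hfm := hf ⟨M, hM⟩
  simp only at hfm
  rw [map_add, map_mul, hfm] at h0
  by_cases hb : Ideal.Quotient.mk M b = 0
  · rw [hb, zero_mul, add_zero] at h0
    have ha : a ∈ M := (Ideal.Quotient.eq_zero_iff_mem).1 h0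
    have hbm : b ∈ M := (Ideal.Quotient.eq_zero_iff_mem).1 hb
    have : Ideal.span ({a, b} : Set R) ≤ M := by
      rw [Ideal.span_le]
      rintro x (rfl | rfl)
      · exact ha
      · exact hbm
    rw [h] at this
    exact hM.ne_top (top_le_iff.1 this)
  · rw [← mul_assoc, mul_inv_cancel₀ hb, one_mul] at h0
    simp at h0
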